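/- On the N-qubit Hilbert space with N ≥ 3 and periodic indexing (site N+1 ≡ 1), define for each j the operator P_j := (i/2)(s_j† s_{j+1} − s_{j+1}† s_j − s_j† s_j + s_{j+1}† s_{j+1}). Then P_j |W⟩ = 0 for every j, and consequently H_ImHop := (i/2) Σ_{j=1}^N (s_j† s_{j+1} − s_{j+1}† s_j) = Σ_{j=1}^N P_j satisfies H_ImHop |W⟩ = 0. Each P_j is not self-adjoint, and P_j† |W⟩ ≠ 0. -/

import Mathlib

open scoped BigOperators

noncomputable section

/-- Configurations of `N` qubits. -/
abbrev Cfg (N : ℕ) := Fin N → Fin 2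

/-- The `N`-qubit Hilbert space `⊗_{j=1}^N ℂ²`, identified with `ℂ^(Fin N → Fin 2)`. -/
abbrev QS (N : ℕ) := EuclideanSpace ℂ (Cfg N)

/-- Computational basis state `|t⟩`. -/
def ket {N : ℕ} (t : Cfg N) : QS N := EuclideanSpace.single t 1

/-- Configuration with a single `1` at site `j`. -/
def eConf {N : ℕ} (j : Fin N) : Cfg N := fun k => if k = j then 1 else 0

/-- The all-zero product state `|0̄⟩`. -/
def zeroKet (N : ℕ) : QS N := ket (fun _ => 0)

/-- The W state `|W⟩ = (1/√N) ∑_j |e_j⟩`. -/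
def Wst (N : ℕ) : QS N := (Real.sqrt N : ℂ)⁻¹ • ∑ j : Fin N, ket (eConf j)

/-- Hard-core boson creation operator `s_j† = |1⟩⟨0|` acting at site `j`. -/
def aDag {N : ℕ} (j : Fin N) : QS N →ₗ[ℂ] QS N where
  toFun ψ := WithLp.toLp 2 (fun s => if s j = 1 then ψ (Function.update s j 0) else 0)
  map_add' ψ φ := by ext s; by_cases h : s j = 1 <;> simp [h]
  map_smul' c ψ := by ext s; by_cases h : s j = 1 <;> simp [h]

/-- Hard-core boson annihilation operator `s_j = |0⟩⟨1|` acting at site `j`. -/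
def aOp {N : ℕ} (j : Fin N) : QS N →ₗ[ℂ] QS N where
  toFun ψ := WithLp.toLp 2 (fun s => if s j = 0 then ψ (Function.update s j 1) else 0)
  map_add' ψ φ := by ext s; by_cases h : s j = 0 <;> simp [h]
  map_smul' c ψ := by ext s; by_cases h : s j = 0 <;> simp [h]

/-- Number operator `n_j = s_j† s_j = |1⟩⟨1|_j`. -/
def nOp {N : ℕ} (j : Fin N) : QS N →ₗ[ℂ] QS N := aDag j ∘ₗ aOp j

/-- The imaginary-hopping Hamiltonian
`H_ImHop = (i/2) ∑_{j=1}^N (s_j† s_{j+1} − s_{j+1}† s_j)` on the periodic chain. -/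
def HImHop (N : ℕ) [NeZero N] : QS N →ₗ[ℂ] QS N :=
  (Complex.I / 2) • ∑ j : Fin N, (aDag j ∘ₗ aOp (j + 1) - aDag (j + 1) ∘ₗ aOp j)

/-- The strictly local non-Hermitian annihilators
`P_j = (i/2)(s_j† s_{j+1} − s_{j+1}† s_j − s_j† s_j + s_{j+1}† s_{j+1})` (periodic indexing). -/
def Pnh {N : ℕ} [NeZero N] (j : Fin N) : QS N →ₗ[ℂ] QS N :=
  (Complex.I / 2) •
    (aDag j ∘ₗ aOp (j + 1) - aDag (j + 1) ∘ₗ aOp j - aDag j ∘ₗ aOp j + aDag (j + 1) ∘ₗ aOp (j + 1))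

section Aux
variable {N : ℕ}

lemma ket_apply (t s : Cfg N) : ket t s = if s = t then 1 else 0 := by
  simp [ket, EuclideanSpace.single_apply]

lemma eConf_inj {a b : Fin N} (h : eConf a = eConf b) : a = b := by
  have := congrFun h a
  simp only [eConf, if_pos rfl] at this
  by_cases hab : a = b
  · exact hab
  · simp [hab] at this

lemma eConf_eq_iff (a b : Fin N) : eConf a = eConf b ↔ a = b :=
  ⟨eConf_inj, fun h => h ▸ rfl⟩

lemma aOp_eConf (k m : Fin N) :
    aOp k (ket (eConf m)) = if k = m then zeroKet N else 0 := by
  ext s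
  show (if s k = 0 then ket (eConf m) (Function.update s k 1) else 0)
      = (if k = m then zeroKet N else 0) s
  rw [apply_ite (fun f : QS N => f s)]
  by_cases hkm : k = m
  · subst hkm
    rw [if_pos rfl]
    show _ = ket (fun _ => 0) s
    rw [ket_apply, ket_apply]
    by_cases hs : s k = 0
    · rw [if_pos hs]
      by_cases h0 : s = fun _ => 0
      · subst h0
        rw [if_pos rfl, if_pos]
        funext l
        by_cases hl : l = k
        · subst hl; simp [eConf]
        · simp [Function.update_of_ne hl, eConf, hl]
      · rw [if_neg h0, if_neg]
        intro hupd
        apply h0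
        funext l
        by_cases hl : l = k
        · subst hl; exact hs
        · have := congrFun hupd l
          rw [Function.update_of_ne hl] at this
          rw [this]
          simp [eConf, hl]
    · rw [if_neg hs, if_neg]
      intro h0
      exact hs (by rw [h0])
  · rw [if_neg hkm]
    show _ = (0 : ℂ)
    by_cases hs : s k = 0
    · rw [if_pos hs, ket_apply, if_neg]
      intro hupd
      have := congrFun hupd k
      rw [Function.update_self] at this
      simp [eConf, hkm] at this
    · rw [if_neg hs]

lemma aDag_zeroKet (j : Fin N) : aDag j (zeroKet N) = ket (eConf j) := by
  ext s
  show (if s j = 1 then zeroKet N (Function.update s j 0) else 0) = ket (eConf j) s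
  rw [ket_apply]
  by_cases hs : s j = 1
  · rw [if_pos hs]
    show (ket (fun _ => 0) (Function.update s j 0)) = _
    rw [ket_apply]
    by_cases he : s = eConf j
    · rw [if_pos he, if_pos]
      subst he
      funext l
      by_cases hl : l = j
      · subst hl; simp
      · simp [Function.update_of_ne hl, eConf, hl]
    · rw [if_neg he, if_neg]
      intro hupd
      apply he
      funext l
      by_cases hl : l = j
      · subst hl; rw [hs]; simp [eConf]
      · have := congrFun hupd l
        rw [Function.update_of_ne hl] at this
        rw [this]; simp [eConf, hl]
  · rw [if_neg hs, if_neg]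
    intro he; apply hs; rw [he]; simp [eConf]

lemma hop_eConf (a b m : Fin N) :
    (aDag a ∘ₗ aOp b) (ket (eConf m)) = if b = m then ket (eConf a) else 0 := by
  rw [LinearMap.comp_apply, aOp_eConf]
  split
  · exact aDag_zeroKet a
  · exact map_zero _

end Aux

set_option linter.unusedSectionVars false
section Main
variable {N : ℕ} [NeZero N]

lemma hop_sum (a b : Fin N) :
    (aDag a ∘ₗ aOp b) (∑ m : Fin N, ket (eConf m)) = ket (eConf a) := by
  rw [map_sum]
  simp only [hop_eConf]
  rw [Finset.sum_ite_eq Finset.univ b (fun _ => ket (eConf a))]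
  simp

lemma Pnh_W (j : Fin N) : Pnh j (Wst N) = 0 := by
  rw [Wst, map_smul]
  have h0 : Pnh j (∑ m : Fin N, ket (eConf m)) = 0 := by
    rw [Pnh]
    simp only [LinearMap.smul_apply, LinearMap.add_apply, LinearMap.sub_apply]
    rw [hop_sum, hop_sum, hop_sum, hop_sum]
    rw [show ket (eConf j) - ket (eConf (j+1)) - ket (eConf j) + ket (eConf (j+1)) = 0 by abel]
    simp
  rw [h0, smul_zero]

lemma decomp : HImHop N = ∑ j : Fin N, Pnh j := by
  unfold HImHop Pnh
  rw [← Finset.smul_sum]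
  congr 1
  have h1 : ∑ j : Fin N, (aDag (j+1) ∘ₗ aOp (j+1)) = ∑ j : Fin N, (aDag j ∘ₗ aOp j) :=
    Fintype.sum_equiv (Equiv.addRight 1) _ _ (fun j => rfl)
  rw [Finset.sum_add_distrib, Finset.sum_sub_distrib, Finset.sum_sub_distrib, h1, Finset.sum_sub_distrib, sub_add_cancel]

lemma inner_ket_left (t : Cfg N) (ψ : QS N) : (inner ℂ (ket t) ψ : ℂ) = ψ t := by
  simp [ket, EuclideanSpace.inner_single_left]

lemma succ_ne (hN : 3 ≤ N) (j : Fin N) : j + 1 ≠ j := by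
  intro h
  have h1 : (1 : Fin N) = 0 := by
    have := add_left_cancel (a := j) (b := (1 : Fin N)) (c := 0) (by rw [add_zero]; exact h)
    exact this
  rw [Fin.one_eq_zero_iff] at h1
  omega

lemma Pnh_ket_self (hN : 3 ≤ N) (j : Fin N) :
    Pnh j (ket (eConf j)) = (-(Complex.I/2)) • (ket (eConf j) + ket (eConf (j+1))) := by
  have hne := succ_ne hN j
  rw [Pnh]
  simp only [LinearMap.smul_apply, LinearMap.add_apply, LinearMap.sub_apply,
    hop_eConf, if_pos rfl, if_neg hne, if_true]
  rw [show (0 : QS N) - ket (eConf (j+1)) - ket (eConf j) + 0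
      = -(ket (eConf j) + ket (eConf (j+1))) by abel]
  rw [smul_neg, neg_smul]

lemma qs_add_apply (f g : QS N) (s : Cfg N) : (f + g) s = f s + g s := rfl

lemma qs_smul_apply (c : ℂ) (f : QS N) (s : Cfg N) : (c • f) s = c * f s := rfl

lemma ket_eConf_apply (a b : Fin N) :
    ket (eConf a) (eConf b) = if b = a then 1 else 0 := by
  rw [ket_apply]
  by_cases h : b = a
  · simp [h]
  · rw [if_neg (fun he => h (eConf_inj he)), if_neg h]

lemma inner_ket_Pnh (hN : 3 ≤ N) (j : Fin N) :
    (inner ℂ (ket (eConf j)) (Pnh j (ket (eConf j))) : ℂ) = -(Complex.I/2) := by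
  have hne := succ_ne hN j
  rw [Pnh_ket_self hN, inner_ket_left, qs_smul_apply, qs_add_apply,
    ket_eConf_apply, ket_eConf_apply, if_pos rfl, if_neg (fun h => hne h.symm)]
  ring

lemma Pnh_not_sa (hN : 3 ≤ N) (j : Fin N) : ¬ IsSelfAdjoint (Pnh j) := by
  intro hsa
  rw [LinearMap.isSelfAdjoint_iff'] at hsa
  have h1 := inner_ket_Pnh hN j
  have h2 : (inner ℂ (Pnh j (ket (eConf j))) (ket (eConf j)) : ℂ)
      = inner ℂ (ket (eConf j)) (Pnh j (ket (eConf j))) := by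
    conv_lhs => rw [← hsa]
    rw [LinearMap.adjoint_inner_left]
  rw [h1, ← inner_conj_symm, h1] at h2
  simp only [map_neg, map_div₀, Complex.conj_I, Complex.conj_ofNat] at h2
  have : Complex.I = 0 := by
    field_simp at h2
    linear_combination Complex.I / 2 * h2
  simp [Complex.I_ne_zero] at this

lemma inner_W_Pnh (hN : 3 ≤ N) (j : Fin N) :
    (inner ℂ (Wst N) (Pnh j (ket (eConf j))) : ℂ) = -Complex.I * ((Real.sqrt N : ℂ))⁻¹ := by
  have hne := succ_ne hN j
  rw [Wst, inner_smul_left, sum_inner]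
  simp only [inner_ket_left, Pnh_ket_self hN]
  have heval : ∀ m : Fin N, (((-(Complex.I/2)) • (ket (eConf j) + ket (eConf (j+1))) : QS N)) (eConf m)
      = (-(Complex.I/2)) * ((if m = j then 1 else 0) + (if m = j + 1 then 1 else 0)) := by
    intro m
    rw [qs_smul_apply, qs_add_apply, ket_eConf_apply, ket_eConf_apply]
  simp only [heval]
  rw [← Finset.mul_sum, Finset.sum_add_distrib]
  rw [Finset.sum_ite_eq' Finset.univ j (fun _ => (1:ℂ)),
      Finset.sum_ite_eq' Finset.univ (j+1) (fun _ => (1:ℂ))]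
  simp only [Finset.mem_univ, if_pos]
  rw [map_inv₀, Complex.conj_ofReal]
  ring

lemma Pnh_adjoint_W (hN : 3 ≤ N) (j : Fin N) :
    LinearMap.adjoint (Pnh j) (Wst N) ≠ 0 := by
  intro h
  have h0 : (inner ℂ (LinearMap.adjoint (Pnh j) (Wst N)) (ket (eConf j)) : ℂ) = 0 := by
    rw [h, inner_zero_left]
  rw [LinearMap.adjoint_inner_left, inner_W_Pnh hN] at h0
  have hs : Real.sqrt N ≠ 0 := by
    refine Real.sqrt_ne_zero'.2 ?_
    exact_mod_cast Nat.lt_of_lt_of_le (by norm_num) hN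
  simp [Complex.I_ne_zero, Complex.ofReal_ne_zero, hs] at h0

end Main

/-- On the periodic `N`-qubit chain (`N ≥ 3`): each `P_j` annihilates `|W⟩`;
`H_ImHop = ∑_j P_j`, hence `H_ImHop |W⟩ = 0`; each `P_j` is not self-adjoint and
`P_j† |W⟩ ≠ 0`. -/
theorem HImHop_typeII_decomposition (N : ℕ) [NeZero N] (hN : 3 ≤ N) :
    (∀ j : Fin N, Pnh j (Wst N) = 0)
      ∧ HImHop N = ∑ j : Fin N, Pnh j
      ∧ HImHop N (Wst N) = 0
      ∧ (∀ j : Fin N, ¬ IsSelfAdjoint (Pnh j))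
      ∧ (∀ j : Fin N, LinearMap.adjoint (Pnh j) (Wst N) ≠ 0) := by
  refine ⟨fun j => Pnh_W j, decomp, ?_, fun j => Pnh_not_sa hN j, fun j => Pnh_adjoint_W hN j⟩
  rw [decomp, LinearMap.sum_apply]
  simp only [Pnh_W]
  simp

end
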